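/- Let S be a semigroup in which every element of the form x*y is idempotent ((x*y)^2 = x*y for all x, y). Then primary conjugacy ~p is transitive in S. -/

import Mathlib

theorem pconj_trans_of_idem {S : Type*} [Semigroup S]
    (hS : ∀ x y : S, (x * y) * (x * y) = x * y) (a b c : S)
    (hab : ∃ u v : WithOne S, (a : WithOne S) = u * v ∧ (b : WithOne S) = v * u)
    (hbc : ∃ u v : WithOne S, (b : WithOne S) = u * v ∧ (c : WithOne S) = v * u) :
    ∃ u v : WithOne S, (a : WithOne S) = u * v ∧ (c : WithOne S) = v * u := by
  obtain ⟨u, v, ha, hb⟩ := hab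
  obtain ⟨s, t, hb', hc⟩ := hbc
  -- degenerate cases: if u or v is 1 then a = b; if s or t is 1 then b = c
  induction u using WithOne.recOneCoe with
  | one =>
      rw [one_mul] at ha; rw [mul_one] at hb
      have : a = b := WithOne.coe_inj.mp (ha.trans hb.symm)
      exact ⟨s, t, this ▸ hb', hc⟩
  | coe u =>
  induction v using WithOne.recOneCoe with
  | one =>
      rw [mul_one] at ha; rw [one_mul] at hb
      have : a = b := WithOne.coe_inj.mp (ha.trans hb.symm)
      exact ⟨s, t, this ▸ hb', hc⟩
  | coe v =>
  induction s using WithOne.recOneCoe with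
  | one =>
      rw [one_mul] at hb'; rw [mul_one] at hc
      have : b = c := WithOne.coe_inj.mp (hb'.trans hc.symm)
      exact ⟨u, v, ha, this ▸ hb⟩
  | coe s =>
  induction t using WithOne.recOneCoe with
  | one =>
      rw [mul_one] at hb'; rw [one_mul] at hc
      have : b = c := WithOne.coe_inj.mp (hb'.trans hc.symm)
      exact ⟨u, v, ha, this ▸ hb⟩
  | coe t =>
      rw [← WithOne.coe_mul] at ha hb hb' hc
      have ha' : a = u * v := WithOne.coe_inj.mp ha
      have hb1 : b = v * u := WithOne.coe_inj.mp hb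
      have hb2 : b = s * t := WithOne.coe_inj.mp hb'
      have hc' : c = t * s := WithOne.coe_inj.mp hc
      refine ⟨(u * s : S), (t * v : S), ?_, ?_⟩
      · rw [← WithOne.coe_mul, WithOne.coe_inj]
        calc a = (u * v) * (u * v) := by conv_lhs => rw [ha', ← hS u v]
          _ = u * (v * u) * v := by simp [mul_assoc]
          _ = (u * s) * (t * v) := by rw [← hb1, hb2]; simp [mul_assoc]
      · rw [← WithOne.coe_mul, WithOne.coe_inj]
        calc c = (t * s) * (t * s) := by conv_lhs => rw [hc', ← hS t s]
          _ = t * (s * t) * s := by simp [mul_assoc]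
          _ = (t * v) * (u * s) := by rw [← hb2, hb1]; simp [mul_assoc]
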